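/- Let M = (x, p) be a deterministic mechanism for 2 agents, 2 divisible items, multi-dimensional additive valuations, and public budgets b, that respects budgets, is incentive compatible, and whose outcome on every valuation profile is individually rational and Pareto optimal. Then for every valuation profile v satisfying b 2 > v 2 1 + v 2 2, v 1 1 > v 2 1, v 1 2 > v 2 2, b 1 > v 1 1, v 1 1 * v 2 2 > v 1 2 * v 2 1, and v 2 1 + v 2 2 > b 1, the outcome satisfies p 1 = b 1 and x 1 2 = (b 1 − v 2 1) / v 2 2 < 1. -/

import Mathlib

open Finset


/-- A feasible (divisible) allocation: fractions in `[0,1]` and each item sold at most once.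
Agents/items are indexed from `0` (paper's agent/item `k` is index `k-1`). -/
def Feasible (n m : ℕ) (x : Fin n → Fin m → ℝ) : Prop :=
  (∀ i j, 0 ≤ x i j ∧ x i j ≤ 1) ∧ ∀ j, ∑ i, x i j ≤ 1

/-- Agent `i`'s (additive, multi-dimensional) value for allocation `x` under valuations `v`. -/
def agentValue {n m : ℕ} (v x : Fin n → Fin m → ℝ) (i : Fin n) : ℝ :=
  ∑ j, x i j * v i j

/-- Individual rationality of an outcome `(x, p)` under valuations `v`. -/
def IR {n m : ℕ} (v x : Fin n → Fin m → ℝ) (p : Fin n → ℝ) : Prop :=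
  (∀ i, 0 ≤ agentValue v x i - p i) ∧ 0 ≤ ∑ i, p i

/-- Pareto optimality of an outcome `(x, p)` under valuations `v` and budgets `b`. -/
def PO {n m : ℕ} (b : Fin n → ℝ) (v x : Fin n → Fin m → ℝ) (p : Fin n → ℝ) : Prop :=
  ¬ ∃ (x' : Fin n → Fin m → ℝ) (p' : Fin n → ℝ),
      Feasible n m x' ∧ (∀ i, p' i ≤ b i) ∧
      (∀ i, agentValue v x i - p i ≤ agentValue v x' i - p' i) ∧
      (∑ i, p i ≤ ∑ i, p' i) ∧
      ((∃ i, agentValue v x i - p i < agentValue v x' i - p' i) ∨ ∑ i, p i < ∑ i, p' i)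

/-- The payment rule respects the public budgets `b` on every (nonnegative) profile. -/
def RespectsBudgets {n m : ℕ} (b : Fin n → ℝ)
    (P : (Fin n → Fin m → ℝ) → Fin n → ℝ) : Prop :=
  ∀ v : Fin n → Fin m → ℝ, (∀ i j, 0 ≤ v i j) → ∀ i, P v i ≤ b i

/-- Incentive compatibility of a deterministic mechanism `(X, P)`. -/
def IC {n m : ℕ} (X : (Fin n → Fin m → ℝ) → Fin n → Fin m → ℝ)
    (P : (Fin n → Fin m → ℝ) → Fin n → ℝ) : Prop :=
  ∀ v : Fin n → Fin m → ℝ, (∀ i j, 0 ≤ v i j) →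
    ∀ (i : Fin n) (v'i : Fin m → ℝ), (∀ j, 0 ≤ v'i j) →
      agentValue v (X (Function.update v i v'i)) i - P (Function.update v i v'i) i ≤
        agentValue v (X v) i - P v i

lemma av_eq (u x : Fin 2 → Fin 2 → ℝ) (i : Fin 2) :
    agentValue u x i = x i 0 * u i 0 + x i 1 * u i 1 := by
  simp [agentValue, Fin.sum_univ_two]

lemma av_update (u x : Fin 2 → Fin 2 → ℝ) (j : Fin 2) (d : Fin 2 → ℝ) (i : Fin 2) :
    agentValue u (fun i' => Function.update (x i') j (x i' j + d i')) i
      = agentValue u x i + d i * u i j := by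
  fin_cases j <;>
  · simp [agentValue, Fin.sum_univ_two, Function.update]
    ring

lemma feas_update (x : Fin 2 → Fin 2 → ℝ) (hx : Feasible 2 2 x) (j : Fin 2) (d : Fin 2 → ℝ)
    (h00 : 0 ≤ x 0 j + d 0) (h01 : x 0 j + d 0 ≤ 1)
    (h10 : 0 ≤ x 1 j + d 1) (h11 : x 1 j + d 1 ≤ 1)
    (hsum : (x 0 j + d 0) + (x 1 j + d 1) ≤ 1) :
    Feasible 2 2 (fun i' => Function.update (x i') j (x i' j + d i')) := by
  constructor
  · intro i jj
    by_cases h : jj = j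
    · subst h
      simp only [Function.update_self]
      fin_cases i
      · exact ⟨h00, h01⟩
      · exact ⟨h10, h11⟩
    · simp only [Function.update_of_ne h]
      exact hx.1 i jj
  · intro jj
    rw [Fin.sum_univ_two]
    by_cases h : jj = j
    · subst h
      simp only [Function.update_self]
      exact hsum
    · simp only [Function.update_of_ne h]
      have := hx.2 jj
      rwa [Fin.sum_univ_two] at this

section improvements

variable {b : Fin 2 → ℝ} {u x : Fin 2 → Fin 2 → ℝ} {p : Fin 2 → ℝ}

lemma xsum_le (hx : Feasible 2 2 x) (j : Fin 2) : x 0 j + x 1 j ≤ 1 := by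
  have := hx.2 j; rwa [Fin.sum_univ_two] at this

lemma p1_bound (hu : ∀ i j, 0 ≤ u i j) (hx : Feasible 2 2 x) (hIR : IR u x p) :
    p 1 ≤ u 1 0 + u 1 1 := by
  have h := hIR.1 1
  rw [av_eq] at h
  nlinarith [hu 1 0, hu 1 1, (hx.1 1 0).1, (hx.1 1 0).2, (hx.1 1 1).1, (hx.1 1 1).2]


/-- Pareto improvement refuter: build the improvement from column-`j` transfer `d` and
payment changes `e`. -/
lemma po_refute (hPO : PO b u x p) (j : Fin 2) (d e : Fin 2 → ℝ)
    (hfeas : Feasible 2 2 (fun i' => Function.update (x i') j (x i' j + d i')))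
    (hb' : ∀ i, p i + e i ≤ b i)
    (hall : ∀ i, 0 ≤ d i * u i j - e i)
    (hsum : 0 ≤ e 0 + e 1)
    (hstrict : (∃ i, 0 < d i * u i j - e i) ∨ 0 < e 0 + e 1) :
    False := by
  apply hPO
  refine ⟨fun i' => Function.update (x i') j (x i' j + d i'), p + e,
    hfeas, ?_, ?_, ?_, ?_⟩
  · intro i; rw [Pi.add_apply]; exact hb' i
  · intro i
    rw [av_update, Pi.add_apply]
    have := hall i; linarith
  · rw [Fin.sum_univ_two, Fin.sum_univ_two, Pi.add_apply, Pi.add_apply]; linarith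
  · rcases hstrict with ⟨i, h⟩ | h
    · left; exact ⟨i, by rw [av_update, Pi.add_apply]; linarith⟩
    · right; rw [Fin.sum_univ_two, Fin.sum_univ_two, Pi.add_apply, Pi.add_apply]; linarith

/-- Full allocation of item `j` when agent 1 has value slack or agent 0 wants it. -/
lemma full_alloc (hu : ∀ i j, 0 ≤ u i j) (hx : Feasible 2 2 x) (hIR : IR u x p)
    (hPO : PO b u x p) (hb0 : p 0 ≤ b 0) (hb1 : p 1 ≤ b 1)
    (hslack : u 1 0 + u 1 1 < b 1) (j : Fin 2) (hj : 0 < u 1 j ∨ 0 < u 0 j) :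
    x 0 j + x 1 j = 1 := by
  by_contra hne
  have hlt : x 0 j + x 1 j < 1 := lt_of_le_of_ne (xsum_le hx j) hne
  have hp1 : p 1 ≤ u 1 0 + u 1 1 := p1_bound hu hx hIR
  have h00 := (hx.1 0 j).1
  have h10 := (hx.1 1 j).1
  by_cases hpos : 0 < u 1 j
  · -- sell ε of item j to agent 1 at price u 1 j / 2
    set t : ℝ := u 1 j / 2 with ht
    have htpos : 0 < t := by positivity
    set ε : ℝ := min (1 - x 0 j - x 1 j) ((b 1 - (u 1 0 + u 1 1)) / (t + 1)) with hε
    have hεpos : 0 < ε :=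
      lt_min (by linarith) (div_pos (by linarith) (by linarith))
    have hε1 : ε ≤ 1 - x 0 j - x 1 j := min_le_left _ _
    have hε2 : ε * t ≤ b 1 - (u 1 0 + u 1 1) := by
      have h2 : ε ≤ (b 1 - (u 1 0 + u 1 1)) / (t + 1) := min_le_right _ _
      have h3 : ε * (t + 1) ≤ b 1 - (u 1 0 + u 1 1) := by
        rw [← div_mul_cancel₀ (b 1 - (u 1 0 + u 1 1)) (by positivity : (t:ℝ) + 1 ≠ 0)]
        exact mul_le_mul_of_nonneg_right h2 (by positivity)
      nlinarith
    refine po_refute hPO j ![0, ε] ![0, ε * t] ?_ ?_ ?_ ?_ ?_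
    · apply feas_update x hx
      · simpa using (hx.1 0 j).1
      · simpa using (hx.1 0 j).2
      · simp; linarith
      · simp; linarith
      · simp; linarith
    · intro i; fin_cases i
      · simpa using hb0
      · simp; linarith
    · intro i; fin_cases i
      · simp
      · simp; nlinarith
    · simp; positivity
    · right; simp; positivity
  · -- u 1 j = 0 : give the unallocated part to agent 0 for free
    have hzero : u 1 j = 0 := le_antisymm (not_lt.1 hpos) (hu 1 j)
    have hj0 : 0 < u 0 j := by
      rcases hj with h | h
      · exact absurd h hpos
      · exact h
    set ε : ℝ := 1 - x 0 j - x 1 j with hε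
    have hεpos : 0 < ε := by simp only [hε]; linarith
    refine po_refute hPO j ![ε, 0] ![0, 0] ?_ ?_ ?_ ?_ ?_
    · apply feas_update x hx
      · simp; linarith
      · simp; linarith
      · simpa using (hx.1 1 j).1
      · simpa using (hx.1 1 j).2
      · simp; linarith
    · intro i; fin_cases i
      · simpa using hb0
      · simpa using hb1
    · intro i; fin_cases i
      · simp; positivity
      · simp
    · simp
    · left; exact ⟨0, by simp; positivity⟩


/-- If agent 0 values item `j` strictly less than agent 1, agent 0 holds none of it. -/
lemma priced_out0 (hu : ∀ i j, 0 ≤ u i j) (hx : Feasible 2 2 x) (hIR : IR u x p)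
    (hPO : PO b u x p) (hb0 : p 0 ≤ b 0)
    (hslack : u 1 0 + u 1 1 < b 1) (j : Fin 2) (hj : u 0 j < u 1 j) :
    x 0 j = 0 := by
  by_contra hne
  have hxpos : 0 < x 0 j := lt_of_le_of_ne (hx.1 0 j).1 (Ne.symm hne)
  have hp1 : p 1 ≤ u 1 0 + u 1 1 := p1_bound hu hx hIR
  have hsum := xsum_le hx j
  have h10 := (hx.1 1 j).1
  set t : ℝ := (u 0 j + u 1 j) / 2 with htd
  have ht0 : u 0 j < t := by simp only [htd]; linarith
  have ht1 : t < u 1 j := by simp only [htd]; linarith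
  have htnn : 0 ≤ t := le_trans (hu 0 j) (le_of_lt ht0)
  set ε : ℝ := min (x 0 j) ((b 1 - (u 1 0 + u 1 1)) / (u 1 j + 1)) with hε
  have hu1jpos : 0 < u 1 j := lt_of_le_of_lt (hu 0 j) hj
  have hεpos : 0 < ε := lt_min hxpos (div_pos (by linarith) (by linarith))
  have hε1 : ε ≤ x 0 j := min_le_left _ _
  have hε2 : ε * t ≤ b 1 - (u 1 0 + u 1 1) := by
    have h2 : ε ≤ (b 1 - (u 1 0 + u 1 1)) / (u 1 j + 1) := min_le_right _ _
    have h3 : ε * (u 1 j + 1) ≤ b 1 - (u 1 0 + u 1 1) := by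
      rw [← div_mul_cancel₀ (b 1 - (u 1 0 + u 1 1)) (by linarith : (u 1 j :ℝ) + 1 ≠ 0)]
      exact mul_le_mul_of_nonneg_right h2 (by linarith)
    nlinarith
  refine po_refute hPO j ![-ε, ε] ![-(ε * t), ε * t] ?_ ?_ ?_ ?_ ?_
  · apply feas_update x hx
    · simp; linarith
    · simp [(hx.1 0 j).2]; linarith [(hx.1 0 j).2]
    · simp; linarith
    · simp; linarith
    · simp; linarith
  · intro i; fin_cases i
    · simp; nlinarith
    · simp; linarith
  · intro i; fin_cases i
    · simp; nlinarith
    · simp; nlinarith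
  · simp
  · left; exact ⟨0, by simp; nlinarith⟩

/-- If agent 1 values item `j` positively but less than agent 0, and holds some of it,
then agent 0's budget binds. -/
lemma clinch0 (hu : ∀ i j, 0 ≤ u i j) (hx : Feasible 2 2 x) (hIR : IR u x p)
    (hPO : PO b u x p) (hb0 : p 0 ≤ b 0) (hb1 : p 1 ≤ b 1)
    (j : Fin 2) (hj : u 1 j < u 0 j) (hj2 : 0 < u 1 j) (hxj : 0 < x 1 j) :
    p 0 = b 0 := by
  rcases eq_or_lt_of_le hb0 with h | h
  · exact h
  exfalso
  have hsum := xsum_le hx j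
  have h00 := (hx.1 0 j).1
  set ε : ℝ := min (x 1 j) ((b 0 - p 0) / u 1 j) with hε
  have hεpos : 0 < ε := lt_min hxj (div_pos (by linarith) hj2)
  have hε1 : ε ≤ x 1 j := min_le_left _ _
  have hε2 : ε * u 1 j ≤ b 0 - p 0 := by
    have h2 : ε ≤ (b 0 - p 0) / u 1 j := min_le_right _ _
    calc ε * u 1 j ≤ ((b 0 - p 0) / u 1 j) * u 1 j :=
          mul_le_mul_of_nonneg_right h2 (le_of_lt hj2)
      _ = b 0 - p 0 := div_mul_cancel₀ _ (ne_of_gt hj2)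
  refine po_refute hPO j ![ε, -ε] ![ε * u 1 j, -(ε * u 1 j)] ?_ ?_ ?_ ?_ ?_
  · apply feas_update x hx
    · simp; linarith
    · simp; linarith
    · simp; linarith
    · simp; linarith [(hx.1 1 j).2]
    · simp; linarith
  · intro i; fin_cases i
    · simp; linarith
    · simp; nlinarith [hu 1 j]
  · intro i; fin_cases i
    · simp; nlinarith
    · simp
  · simp
  · left; exact ⟨0, by simp; nlinarith⟩

/-- If agent 1 values item `j` at zero but agent 0 values it positively,
agent 1 holds none of it. -/
lemma clinch0' (hu : ∀ i j, 0 ≤ u i j) (hx : Feasible 2 2 x) (hIR : IR u x p)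
    (hPO : PO b u x p) (hb0 : p 0 ≤ b 0) (hb1 : p 1 ≤ b 1)
    (j : Fin 2) (hj : u 1 j = 0) (hj2 : 0 < u 0 j) :
    x 1 j = 0 := by
  by_contra hne
  have hxpos : 0 < x 1 j := lt_of_le_of_ne (hx.1 1 j).1 (Ne.symm hne)
  have hsum := xsum_le hx j
  have h00 := (hx.1 0 j).1
  refine po_refute hPO j ![x 1 j, -(x 1 j)] ![0, 0] ?_ ?_ ?_ ?_ ?_
  · apply feas_update x hx
    · simp; linarith
    · simp; linarith
    · simp
    · simp
    · simp; linarith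
  · intro i; fin_cases i
    · simpa using hb0
    · simpa using hb1
  · intro i; fin_cases i
    · simp; positivity
    · simp [hj]
  · simp
  · left; exact ⟨0, by simp; positivity⟩


set_option maxHeartbeats 2000000 in
/-- Ratio swap: if item 0 is relatively more valuable to agent 0
(`u 0 1 * u 1 0 < u 0 0 * u 1 1`), then it cannot be that agent 1 holds part of
item 0 while agent 0 holds part of item 1. -/
lemma ratio_swap (hu : ∀ i j, 0 ≤ u i j) (hx : Feasible 2 2 x) (hIR : IR u x p)
    (hPO : PO b u x p) (hb0 : p 0 ≤ b 0)
    (hslack : u 1 0 + u 1 1 < b 1) (hr : u 0 1 * u 1 0 < u 0 0 * u 1 1) :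
    x 1 0 = 0 ∨ x 0 1 = 0 := by
  by_contra hne
  push_neg at hne
  obtain ⟨hne1, hne2⟩ := hne
  have hx10 : 0 < x 1 0 := lt_of_le_of_ne (hx.1 1 0).1 (Ne.symm hne1)
  have hx01 : 0 < x 0 1 := lt_of_le_of_ne (hx.1 0 1).1 (Ne.symm hne2)
  have hp1 : p 1 ≤ u 1 0 + u 1 1 := p1_bound hu hx hIR
  have hprod : 0 ≤ u 0 1 * u 1 0 := mul_nonneg (hu 0 1) (hu 1 0)
  have hu00 : 0 < u 0 0 := by
    rcases lt_or_ge 0 (u 0 0) with h | h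
    · exact h
    · exfalso
      have : u 0 0 * u 1 1 ≤ 0 := mul_nonpos_of_nonpos_of_nonneg h (hu 1 1)
      linarith
  have hu11 : 0 < u 1 1 := by
    rcases lt_or_ge 0 (u 1 1) with h | h
    · exact h
    · exfalso
      have : u 0 0 * u 1 1 ≤ 0 := mul_nonpos_of_nonneg_of_nonpos (le_of_lt hu00) h
      linarith
  have hu10 := hu 1 0
  have hu01 := hu 0 1
  -- abbreviations
  have hDfpos : 0 < u 0 0 * u 1 1 - u 0 1 * u 1 0 := by linarith
  set Df : ℝ := u 0 0 * u 1 1 - u 0 1 * u 1 0 with hDf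
  set θ : ℝ := Df / (2 * (u 1 0 + 1)) with hθ
  have hθpos : 0 < θ := div_pos hDfpos (by linarith)
  have hθ10 : θ * u 1 0 ≤ Df / 2 := by
    rw [hθ, div_mul_eq_mul_div, div_le_div_iff₀ (by linarith) (by norm_num)]
    nlinarith
  set gf : ℝ := u 0 1 + θ with hgf
  have hgfpos : 0 < gf := by positivity
  obtain ⟨ε, hεpos, hγle, hδle, hεDf⟩ :
      ∃ ε : ℝ, 0 < ε ∧ ε * gf ≤ x 1 0 ∧ ε * u 0 0 ≤ x 0 1 ∧
        ε * Df ≤ b 1 - (u 1 0 + u 1 1) := by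
    refine ⟨min (min (x 1 0 / gf) (x 0 1 / u 0 0)) ((b 1 - (u 1 0 + u 1 1)) / (Df + 1)),
      lt_min (lt_min (div_pos hx10 hgfpos) (div_pos hx01 hu00))
        (div_pos (by linarith) (by linarith)), ?_, ?_, ?_⟩
    · have h2 : min (min (x 1 0 / gf) (x 0 1 / u 0 0)) ((b 1 - (u 1 0 + u 1 1)) / (Df + 1))
          ≤ x 1 0 / gf := le_trans (min_le_left _ _) (min_le_left _ _)
      calc _ ≤ (x 1 0 / gf) * gf := mul_le_mul_of_nonneg_right h2 (le_of_lt hgfpos)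
        _ = x 1 0 := div_mul_cancel₀ _ (ne_of_gt hgfpos)
    · have h2 : min (min (x 1 0 / gf) (x 0 1 / u 0 0)) ((b 1 - (u 1 0 + u 1 1)) / (Df + 1))
          ≤ x 0 1 / u 0 0 := le_trans (min_le_left _ _) (min_le_right _ _)
      calc _ ≤ (x 0 1 / u 0 0) * u 0 0 := mul_le_mul_of_nonneg_right h2 (le_of_lt hu00)
        _ = x 0 1 := div_mul_cancel₀ _ (ne_of_gt hu00)
    · have h2 : min (min (x 1 0 / gf) (x 0 1 / u 0 0)) ((b 1 - (u 1 0 + u 1 1)) / (Df + 1))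
          ≤ (b 1 - (u 1 0 + u 1 1)) / (Df + 1) := min_le_right _ _
      have h3 : (b 1 - (u 1 0 + u 1 1)) / (Df + 1) * Df ≤ b 1 - (u 1 0 + u 1 1) := by
        rw [div_mul_eq_mul_div, div_le_iff₀ (by linarith)]
        nlinarith
      calc _ ≤ (b 1 - (u 1 0 + u 1 1)) / (Df + 1) * Df :=
            mul_le_mul_of_nonneg_right h2 (le_of_lt hDfpos)
        _ ≤ b 1 - (u 1 0 + u 1 1) := h3
  set γ : ℝ := ε * gf with hγ
  set δ : ℝ := ε * u 0 0 with hδ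
  have hγpos : 0 < γ := by positivity
  have hδpos : 0 < δ := by positivity
  set Δ1 : ℝ := δ * u 1 1 - γ * u 1 0 with hΔ1
  have hΔ1eq : Δ1 = ε * (Df - θ * u 1 0) := by
    simp only [hΔ1, hδ, hγ, hgf, hDf]; ring
  have hΔ1pos : 0 < Δ1 := by
    rw [hΔ1eq]
    have h5 : Df / 2 ≤ Df - θ * u 1 0 := by linarith
    nlinarith
  have hΔ1le : Δ1 ≤ b 1 - (u 1 0 + u 1 1) := by
    have h4 : Δ1 ≤ ε * Df := by
      rw [hΔ1eq]
      nlinarith [mul_nonneg (le_of_lt hθpos) hu10]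
    linarith
  have hs00 := xsum_le hx 0
  have hs11 := xsum_le hx 1
  have hb00 := (hx.1 0 0).1
  have hb011 := (hx.1 0 1).2
  have hb10' := (hx.1 1 0).2
  have hb111 := (hx.1 1 1).1
  have hgain : 0 < γ * u 0 0 - δ * u 0 1 := by
    have : γ * u 0 0 - δ * u 0 1 = ε * (θ * u 0 0) := by
      simp only [hγ, hδ, hgf]; ring
    rw [this]; positivity
  apply hPO
  refine ⟨![![x 0 0 + γ, x 0 1 - δ], ![x 1 0 - γ, x 1 1 + δ]], p + ![0, Δ1],
    ?_, ?_, ?_, ?_, ?_⟩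
  · constructor
    · intro i j
      fin_cases i <;> fin_cases j <;>
        simp only [Matrix.cons_val_zero, Matrix.cons_val_one, Matrix.head_cons,
          Fin.mk_zero, Fin.mk_one] <;> constructor <;> linarith
    · intro j
      rw [Fin.sum_univ_two]
      fin_cases j <;>
        simp only [Matrix.cons_val_zero, Matrix.cons_val_one, Matrix.head_cons,
          Fin.mk_zero, Fin.mk_one] <;> linarith
  · intro i; fin_cases i
    · simpa using hb0
    · simp only [Pi.add_apply, Matrix.cons_val_one, Matrix.head_cons, Fin.mk_one, Matrix.cons_val_zero]
      linarith
  · intro i; fin_cases i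
    · rw [av_eq, av_eq]
      simp only [Pi.add_apply, Matrix.cons_val_zero, Matrix.cons_val_one,
        Matrix.head_cons, Fin.mk_zero]
      nlinarith
    · rw [av_eq, av_eq]
      simp only [Pi.add_apply, Matrix.cons_val_zero, Matrix.cons_val_one,
        Matrix.head_cons, Fin.mk_one]
      simp only [hΔ1]
      ring_nf
      nlinarith
  · rw [Fin.sum_univ_two, Fin.sum_univ_two]
    simp only [Pi.add_apply, Matrix.cons_val_zero, Matrix.cons_val_one, Matrix.head_cons]
    linarith
  · right
    rw [Fin.sum_univ_two, Fin.sum_univ_two]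
    simp only [Pi.add_apply, Matrix.cons_val_zero, Matrix.cons_val_one, Matrix.head_cons]
    linarith

end improvements


def pf (a w : Fin 2 → ℝ) : Fin 2 → Fin 2 → ℝ := ![a, w]

@[simp] lemma pf_zero (a w : Fin 2 → ℝ) : pf a w 0 = a := rfl
@[simp] lemma pf_one (a w : Fin 2 → ℝ) : pf a w 1 = w := rfl

lemma pf_nonneg {a w : Fin 2 → ℝ} (ha : ∀ j, 0 ≤ a j) (hw : ∀ j, 0 ≤ w j) :
    ∀ i j, 0 ≤ pf a w i j := by
  intro i j; fin_cases i
  · exact ha j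
  · exact hw j

lemma update_pf0 (a w a' : Fin 2 → ℝ) : Function.update (pf a w) 0 a' = pf a' w := by
  funext i; fin_cases i <;> simp [pf, Function.update]

lemma update_pf1 (a w w' : Fin 2 → ℝ) : Function.update (pf a w) 1 w' = pf a w' := by
  funext i; fin_cases i <;> simp [pf, Function.update]

lemma v_eq_pf (v : Fin 2 → Fin 2 → ℝ) : v = pf (v 0) (v 1) := by
  funext i; fin_cases i <;> rfl

lemma le_of_forall_delta {a c d0 : ℝ} (hd0 : 0 < d0)
    (h : ∀ δ : ℝ, 0 < δ → δ < d0 → a ≤ c + δ) : a ≤ c := by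
  by_contra h'
  push_neg at h'
  have hmpos : 0 < min (d0 / 2) ((a - c) / 2) := lt_min (by linarith) (by linarith)
  have h2 := h _ hmpos (lt_of_le_of_lt (min_le_left _ _) (by linarith))
  have h3 : min (d0 / 2) ((a - c) / 2) ≤ (a - c) / 2 := min_le_right _ _
  linarith

set_option maxHeartbeats 4000000 in
/-- Lemma on Case 3, continued: with 2 agents and 2 divisible items
(index 0 = paper's agent/item 1, index 1 = paper's agent/item 2), for every profile with
`b 2 > v 2 1 + v 2 2`, `v 1 1 > v 2 1`, `v 1 2 > v 2 2`, `b 1 > v 1 1`,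
`v 1 1 * v 2 2 > v 1 2 * v 2 1`, and `v 2 1 + v 2 2 > b 1`, every IR, PO, IC mechanism
produces `p 1 = b 1` and `x 1 2 = (b 1 − v 2 1) / v 2 2 < 1`. -/
theorem stmt5 (b : Fin 2 → ℝ) (hb : ∀ i, 0 ≤ b i)
    (X : (Fin 2 → Fin 2 → ℝ) → Fin 2 → Fin 2 → ℝ)
    (P : (Fin 2 → Fin 2 → ℝ) → Fin 2 → ℝ)
    (hX : ∀ v : Fin 2 → Fin 2 → ℝ, (∀ i j, 0 ≤ v i j) → Feasible 2 2 (X v))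
    (hP : RespectsBudgets b P)
    (hIC : IC X P)
    (hIRPO : ∀ v : Fin 2 → Fin 2 → ℝ, (∀ i j, 0 ≤ v i j) →
      IR v (X v) (P v) ∧ PO b v (X v) (P v))
    (v : Fin 2 → Fin 2 → ℝ) (hv : ∀ i j, 0 ≤ v i j)
    (h1 : v 1 0 + v 1 1 < b 1) (h2 : v 1 0 < v 0 0) (h3 : v 1 1 < v 0 1)
    (h4 : v 0 0 < b 0) (h5 : v 0 1 * v 1 0 < v 0 0 * v 1 1)
    (h6 : b 0 < v 1 0 + v 1 1) :
    P v 0 = b 0 ∧ X v 0 1 = (b 0 - v 1 0) / v 1 1 ∧ X v 0 1 < 1 := by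
  have hv1nn : ∀ j, 0 ≤ v 1 j := fun j => hv 1 j
  have hv0nn : ∀ j, 0 ≤ v 0 j := fun j => hv 0 j
  have hCnn : 0 ≤ v 1 0 := hv 1 0
  have hDnn : 0 ≤ v 1 1 := hv 1 1
  have hApos : 0 < v 0 0 := lt_of_le_of_lt hCnn h2
  have hBpos : 0 < v 0 1 := lt_of_le_of_lt hDnn h3
  have hb0pos : 0 < b 0 := lt_trans hApos h4
  have hDpos : 0 < v 1 1 := by linarith
  -- basic per-profile facts
  have hIRg : ∀ a w : Fin 2 → ℝ, (∀ j, 0 ≤ a j) → (∀ j, 0 ≤ w j) →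
      IR (pf a w) (X (pf a w)) (P (pf a w)) :=
    fun a w ha hw => (hIRPO _ (pf_nonneg ha hw)).1
  have hPOg : ∀ a w : Fin 2 → ℝ, (∀ j, 0 ≤ a j) → (∀ j, 0 ≤ w j) →
      PO b (pf a w) (X (pf a w)) (P (pf a w)) :=
    fun a w ha hw => (hIRPO _ (pf_nonneg ha hw)).2
  have hFg : ∀ a w : Fin 2 → ℝ, (∀ j, 0 ≤ a j) → (∀ j, 0 ≤ w j) →
      Feasible 2 2 (X (pf a w)) :=
    fun a w ha hw => hX _ (pf_nonneg ha hw)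
  have hq0 : ∀ a w : Fin 2 → ℝ, (∀ j, 0 ≤ a j) → (∀ j, 0 ≤ w j) →
      P (pf a w) 0 ≤ b 0 :=
    fun a w ha hw => hP _ (pf_nonneg ha hw) 0
  have hq1 : ∀ a w : Fin 2 → ℝ, (∀ j, 0 ≤ a j) → (∀ j, 0 ≤ w j) →
      P (pf a w) 1 ≤ b 1 :=
    fun a w ha hw => hP _ (pf_nonneg ha hw) 1
  -- specialized incentive constraints
  have IC0 : ∀ a a' : Fin 2 → ℝ, (∀ j, 0 ≤ a j) → (∀ j, 0 ≤ a' j) →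
      X (pf a' (v 1)) 0 0 * a 0 + X (pf a' (v 1)) 0 1 * a 1 - P (pf a' (v 1)) 0 ≤
        X (pf a (v 1)) 0 0 * a 0 + X (pf a (v 1)) 0 1 * a 1 - P (pf a (v 1)) 0 := by
    intro a a' ha ha'
    have h := hIC (pf a (v 1)) (pf_nonneg ha hv1nn) 0 a' ha'
    rw [update_pf0] at h
    simpa only [av_eq, pf_zero] using h
  have IC1 : ∀ a w' : Fin 2 → ℝ, (∀ j, 0 ≤ a j) → (∀ j, 0 ≤ w' j) →
      X (pf a w') 1 0 * v 1 0 + X (pf a w') 1 1 * v 1 1 - P (pf a w') 1 ≤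
        X (pf a (v 1)) 1 0 * v 1 0 + X (pf a (v 1)) 1 1 * v 1 1 - P (pf a (v 1)) 1 := by
    intro a w' ha hw'
    have h := hIC (pf a (v 1)) (pf_nonneg ha hv1nn) 1 w' hw'
    rw [update_pf1] at h
    simpa only [av_eq, pf_one] using h

  have vecnn : ∀ y z : ℝ, 0 ≤ y → 0 ≤ z → ∀ j, 0 ≤ (![y, z] : Fin 2 → ℝ) j := by
    intro y z hy hz j
    fin_cases j
    · simpa using hy
    · simpa using hz
  -- L1: at "low" reports (e,t) with e < v10 (or e = 0) and t < v11, agent 0's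
  -- allocation is worthless to it and its payment is ≤ 0.
  have L1 : ∀ e t : ℝ, 0 ≤ e → (e < v 1 0 ∨ e = 0) → 0 ≤ t → t < v 1 1 →
      X (pf ![e, t] (v 1)) 0 0 * e = 0 ∧ X (pf ![e, t] (v 1)) 0 1 = 0 ∧
        P (pf ![e, t] (v 1)) 0 ≤ 0 := by
    intro e t he hec ht htD
    have hann := vecnn e t he ht
    have hslack : (pf ![e,t] (v 1)) 1 0 + (pf ![e,t] (v 1)) 1 1 < b 1 := by simpa using h1
    have hx01 : X (pf ![e, t] (v 1)) 0 1 = 0 := by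
      refine priced_out0 (pf_nonneg hann hv1nn) (hFg _ _ hann hv1nn) (hIRg _ _ hann hv1nn)
        (hPOg _ _ hann hv1nn) (hq0 _ _ hann hv1nn) hslack 1 ?_
      simpa using htD
    have hx00e : X (pf ![e, t] (v 1)) 0 0 * e = 0 := by
      rcases hec with hlt | h0
      · have hz : X (pf ![e, t] (v 1)) 0 0 = 0 := by
          refine priced_out0 (pf_nonneg hann hv1nn) (hFg _ _ hann hv1nn) (hIRg _ _ hann hv1nn)
            (hPOg _ _ hann hv1nn) (hq0 _ _ hann hv1nn) hslack 0 ?_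
          simpa using hlt
        rw [hz, zero_mul]
      · rw [h0, mul_zero]
    refine ⟨hx00e, hx01, ?_⟩
    have hIRv := (hIRg _ _ hann hv1nn).1 0
    rw [av_eq] at hIRv
    simp only [pf_zero, Matrix.cons_val_zero, Matrix.cons_val_one, Matrix.head_cons] at hIRv
    rw [hx01] at hIRv
    linarith [hx00e]
  -- L2: the payment at low reports is constant
  have L2 : ∀ e t e' t' : ℝ, 0 ≤ e → (e < v 1 0 ∨ e = 0) → 0 ≤ t → t < v 1 1 →
      0 ≤ e' → (e' < v 1 0 ∨ e' = 0) → 0 ≤ t' → t' < v 1 1 →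
      P (pf ![e, t] (v 1)) 0 ≤ P (pf ![e', t'] (v 1)) 0 := by
    intro e t e' t' he hec ht htD he' hec' ht' htD'
    have hL := L1 e t he hec ht htD
    have hL' := L1 e' t' he' hec' ht' htD'
    have hic := IC0 ![e, t] ![e', t'] (vecnn e t he ht) (vecnn e' t' he' ht')
    simp only [Matrix.cons_val_zero, Matrix.cons_val_one, Matrix.head_cons] at hic
    have hnn : 0 ≤ X (pf ![e', t'] (v 1)) 0 0 * e :=
      mul_nonneg ((hFg _ _ (vecnn e' t' he' ht') hv1nn).1 0 0).1 he
    rw [hL'.2.1, hL.2.1, hL.1] at hic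
    linarith
  -- the constant low payment is zero
  have hpbar0 : P (pf ![(0:ℝ), v 1 1 / 2] (v 1)) 0 = 0 := by
    have hcond : ((0:ℝ) < v 1 0 ∨ (0:ℝ) = 0) := Or.inr rfl
    have hhalf1 : (0:ℝ) ≤ v 1 1 / 2 := by linarith
    have hhalf2 : v 1 1 / 2 < v 1 1 := by linarith
    have hle : P (pf ![(0:ℝ), v 1 1 / 2] (v 1)) 0 ≤ 0 :=
      (L1 0 (v 1 1 / 2) le_rfl hcond hhalf1 hhalf2).2.2
    have hge : ∀ ε : ℝ, 0 < ε → -ε ≤ P (pf ![(0:ℝ), v 1 1 / 2] (v 1)) 0 := by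
      intro ε hε
      obtain ⟨t, htpos, htD2, htε⟩ : ∃ t : ℝ, 0 < t ∧ t ≤ v 1 1 / 2 ∧ t ≤ ε / 2 :=
        ⟨min (v 1 1 / 2) (ε / 2), lt_min (by linarith) (by linarith),
          min_le_left _ _, min_le_right _ _⟩
      obtain ⟨η, hηpos, hηb, hηε⟩ : ∃ η : ℝ, 0 < η ∧
          η ≤ (b 1 - (v 1 0 + v 1 1)) / 2 ∧ η ≤ ε / 4 :=
        ⟨min ((b 1 - (v 1 0 + v 1 1)) / 2) (ε / 4), lt_min (by linarith) (by linarith),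
          min_le_left _ _, min_le_right _ _⟩
      have htnn : (0:ℝ) ≤ t := le_of_lt htpos
      have hℓnn := vecnn 0 t le_rfl htnn
      have hwnn := vecnn η (t + η) (le_of_lt hηpos) (by linarith)
      -- facts at the profile (ℓ, w')
      have hslack' : (pf ![(0:ℝ), t] ![η, t + η]) 1 0 + (pf ![(0:ℝ), t] ![η, t + η]) 1 1
          < b 1 := by
        simp only [pf_one, Matrix.cons_val_zero, Matrix.cons_val_one, Matrix.head_cons]
        linarith
      have hx00' : X (pf ![(0:ℝ), t] ![η, t + η]) 0 0 = 0 := by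
        refine priced_out0 (pf_nonneg hℓnn hwnn) (hFg _ _ hℓnn hwnn) (hIRg _ _ hℓnn hwnn)
          (hPOg _ _ hℓnn hwnn) (hq0 _ _ hℓnn hwnn) hslack' 0 ?_
        simpa using hηpos
      have hx01' : X (pf ![(0:ℝ), t] ![η, t + η]) 0 1 = 0 := by
        refine priced_out0 (pf_nonneg hℓnn hwnn) (hFg _ _ hℓnn hwnn) (hIRg _ _ hℓnn hwnn)
          (hPOg _ _ hℓnn hwnn) (hq0 _ _ hℓnn hwnn) hslack' 1 ?_
        simpa using hηpos
      have hfa0 : X (pf ![(0:ℝ), t] ![η, t + η]) 0 0 + X (pf ![(0:ℝ), t] ![η, t + η]) 1 0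
          = 1 := by
        refine full_alloc (pf_nonneg hℓnn hwnn) (hFg _ _ hℓnn hwnn) (hIRg _ _ hℓnn hwnn)
          (hPOg _ _ hℓnn hwnn) (hq0 _ _ hℓnn hwnn) (hq1 _ _ hℓnn hwnn) hslack' 0 (Or.inl ?_)
        simpa using hηpos
      have hfa1 : X (pf ![(0:ℝ), t] ![η, t + η]) 0 1 + X (pf ![(0:ℝ), t] ![η, t + η]) 1 1
          = 1 := by
        refine full_alloc (pf_nonneg hℓnn hwnn) (hFg _ _ hℓnn hwnn) (hIRg _ _ hℓnn hwnn)
          (hPOg _ _ hℓnn hwnn) (hq0 _ _ hℓnn hwnn) (hq1 _ _ hℓnn hwnn) hslack' 1 (Or.inl ?_)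
        simp only [pf_one, Matrix.cons_val_one, Matrix.head_cons, Matrix.cons_val_zero]
        linarith
      have hx10' : X (pf ![(0:ℝ), t] ![η, t + η]) 1 0 = 1 := by rw [hx00'] at hfa0; linarith
      have hx11' : X (pf ![(0:ℝ), t] ![η, t + η]) 1 1 = 1 := by rw [hx01'] at hfa1; linarith
      -- agent 1's payment at (ℓ, w') is at most its reported value
      have hp1' : P (pf ![(0:ℝ), t] ![η, t + η]) 1 ≤ η + (t + η) := by
        have hIRv := (hIRg _ _ hℓnn hwnn).1 1
        rw [av_eq] at hIRv
        simp only [pf_one, Matrix.cons_val_zero, Matrix.cons_val_one, Matrix.head_cons,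
          hx10', hx11'] at hIRv
        linarith
      -- agent 1's incentive constraint at (ℓ, v 1)
      have hic := IC1 ![(0:ℝ), t] ![η, t + η] hℓnn hwnn
      rw [hx10', hx11'] at hic
      have hble0 : X (pf ![(0:ℝ), t] (v 1)) 1 0 * v 1 0 ≤ v 1 0 := by
        have := ((hFg _ _ hℓnn hv1nn).1 1 0).2
        nlinarith [hCnn]
      have hble1 : X (pf ![(0:ℝ), t] (v 1)) 1 1 * v 1 1 ≤ v 1 1 := by
        have := ((hFg _ _ hℓnn hv1nn).1 1 1).2
        nlinarith [hDnn]
      have hP1le : P (pf ![(0:ℝ), t] (v 1)) 1 ≤ η + (t + η) := by linarith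
      -- the sum of payments at (ℓ, v 1) is nonnegative
      have hsum := (hIRg _ _ hℓnn hv1nn).2
      rw [Fin.sum_univ_two] at hsum
      have hP0ge : -(η + (t + η)) ≤ P (pf ![(0:ℝ), t] (v 1)) 0 := by linarith
      have hconst : P (pf ![(0:ℝ), v 1 1 / 2] (v 1)) 0 = P (pf ![(0:ℝ), t] (v 1)) 0 := by
        have hA := L2 0 (v 1 1 / 2) 0 t le_rfl hcond hhalf1 hhalf2 le_rfl hcond htnn
          (by linarith)
        have hB := L2 0 t 0 (v 1 1 / 2) le_rfl hcond htnn (by linarith) le_rfl hcond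
          hhalf1 hhalf2
        linarith
      rw [hconst]
      linarith
    by_contra hne
    have hlt : P (pf ![(0:ℝ), v 1 1 / 2] (v 1)) 0 < 0 := lt_of_le_of_ne hle hne
    have := hge (-(P (pf ![(0:ℝ), v 1 1 / 2] (v 1)) 0) / 2) (by linarith)
    linarith

  -- R1: at reports (e,t) with v10 < e < b0 and t < v11, agent 0 buys exactly item 0
  -- at a price between v10 and e.
  have R1 : ∀ e t : ℝ, v 1 0 < e → e < b 0 → 0 ≤ t → t < v 1 1 →
      X (pf ![e, t] (v 1)) 0 0 = 1 ∧ X (pf ![e, t] (v 1)) 0 1 = 0 ∧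
        v 1 0 ≤ P (pf ![e, t] (v 1)) 0 ∧ P (pf ![e, t] (v 1)) 0 ≤ e := by
    intro e t hCe heb ht htD
    have hepos : 0 < e := lt_of_le_of_lt hCnn hCe
    have hann := vecnn e t (le_of_lt hepos) ht
    have hslack : (pf ![e,t] (v 1)) 1 0 + (pf ![e,t] (v 1)) 1 1 < b 1 := by simpa using h1
    have hfeas := hFg ![e, t] (v 1) hann hv1nn
    have hx01 : X (pf ![e, t] (v 1)) 0 1 = 0 := by
      refine priced_out0 (pf_nonneg hann hv1nn) hfeas (hIRg _ _ hann hv1nn)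
        (hPOg _ _ hann hv1nn) (hq0 _ _ hann hv1nn) hslack 1 ?_
      simpa using htD
    have hx10 : X (pf ![e, t] (v 1)) 1 0 = 0 := by
      rcases eq_or_lt_of_le hCnn with hC0 | hCpos
      · refine clinch0' (pf_nonneg hann hv1nn) hfeas (hIRg _ _ hann hv1nn)
          (hPOg _ _ hann hv1nn) (hq0 _ _ hann hv1nn) (hq1 _ _ hann hv1nn) 0 ?_ ?_
        · simpa using hC0.symm
        · simpa using hepos
      · by_contra hne
        have hpos : 0 < X (pf ![e, t] (v 1)) 1 0 :=
          lt_of_le_of_ne (hfeas.1 1 0).1 (Ne.symm hne)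
        have hp0 : P (pf ![e, t] (v 1)) 0 = b 0 := by
          refine clinch0 (pf_nonneg hann hv1nn) hfeas (hIRg _ _ hann hv1nn)
            (hPOg _ _ hann hv1nn) (hq0 _ _ hann hv1nn) (hq1 _ _ hann hv1nn) 0 ?_ ?_ hpos
          · simpa using hCe
          · simpa using hCpos
        have hIRv := (hIRg _ _ hann hv1nn).1 0
        rw [av_eq] at hIRv
        simp only [pf_zero, Matrix.cons_val_zero, Matrix.cons_val_one,
          Matrix.head_cons, hx01, hp0] at hIRv
        have hle1 := (hfeas.1 0 0).2
        have hmul : X (pf ![e, t] (v 1)) 0 0 * e ≤ e :=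
          mul_le_of_le_one_left (le_of_lt hepos) hle1
        linarith
    have hfa0 : X (pf ![e, t] (v 1)) 0 0 + X (pf ![e, t] (v 1)) 1 0 = 1 := by
      refine full_alloc (pf_nonneg hann hv1nn) hfeas (hIRg _ _ hann hv1nn)
        (hPOg _ _ hann hv1nn) (hq0 _ _ hann hv1nn) (hq1 _ _ hann hv1nn) hslack 0
        (Or.inr ?_)
      simpa using hepos
    have hx00 : X (pf ![e, t] (v 1)) 0 0 = 1 := by rw [hx10] at hfa0; linarith
    have hub : P (pf ![e, t] (v 1)) 0 ≤ e := by
      have hIRv := (hIRg _ _ hann hv1nn).1 0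
      rw [av_eq] at hIRv
      simp only [pf_zero, Matrix.cons_val_zero, Matrix.cons_val_one,
        Matrix.head_cons, hx01, hx00] at hIRv
      linarith
    refine ⟨hx00, hx01, ?_, hub⟩
    -- lower bound via low reports
    have key : ∀ e' : ℝ, 0 ≤ e' → (e' < v 1 0 ∨ e' = 0) → e' ≤ P (pf ![e, t] (v 1)) 0 := by
      intro e' he' hec'
      have hcond2 : (0:ℝ) ≤ v 1 1 / 2 := by linarith
      have hcond3 : v 1 1 / 2 < v 1 1 := by linarith
      have hL := L1 e' (v 1 1 / 2) he' hec' hcond2 hcond3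
      have hpconst : P (pf ![e', v 1 1 / 2] (v 1)) 0 = 0 := by
        have hA := L2 e' (v 1 1 / 2) 0 (v 1 1 / 2) he' hec' hcond2 hcond3 le_rfl
          (Or.inr rfl) hcond2 hcond3
        have hB := L2 0 (v 1 1 / 2) e' (v 1 1 / 2) le_rfl (Or.inr rfl) hcond2 hcond3
          he' hec' hcond2 hcond3
        linarith [hpbar0]
      have hic := IC0 ![e', v 1 1 / 2] ![e, t] (vecnn e' (v 1 1 / 2) he' hcond2) hann
      simp only [Matrix.cons_val_zero, Matrix.cons_val_one, Matrix.head_cons] at hic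
      rw [hx00, hx01, hL.1, hL.2.1, hpconst] at hic
      linarith
    rcases eq_or_lt_of_le hCnn with hC0 | hCpos
    · have := key 0 le_rfl (Or.inr rfl)
      linarith
    · by_contra hlow
      push_neg at hlow
      set q := P (pf ![e, t] (v 1)) 0 with hq
      have hmax : max q 0 < v 1 0 := max_lt hlow hCpos
      have h1' : 0 ≤ (max q 0 + v 1 0) / 2 := by
        have := le_max_right q 0
        linarith
      have h2' : (max q 0 + v 1 0) / 2 < v 1 0 := by linarith
      have h3' := key _ h1' (Or.inl h2')
      have h4' := le_max_left q 0
      linarith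
  -- CL: classification at profiles where agent 0 dominates with the right ratio
  have CL : ∀ a : Fin 2 → ℝ, (∀ j, 0 ≤ a j) → v 1 0 < a 0 → a 0 < b 0 → v 1 1 < a 1 →
      a 1 * v 1 0 < a 0 * v 1 1 →
      (X (pf a (v 1)) 0 0 = 1 ∧ X (pf a (v 1)) 0 1 = 1) ∨
      (X (pf a (v 1)) 0 0 = 1 ∧ X (pf a (v 1)) 0 1 < 1 ∧ P (pf a (v 1)) 0 = b 0) := by
    intro a ha h20 h40 h31 h50
    have ha0pos : 0 < a 0 := lt_of_le_of_lt hCnn h20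
    have hslack : (pf a (v 1)) 1 0 + (pf a (v 1)) 1 1 < b 1 := by simpa using h1
    have hfeas := hFg a (v 1) ha hv1nn
    have hx10 : X (pf a (v 1)) 1 0 = 0 := by
      rcases eq_or_lt_of_le hCnn with hC0 | hCpos
      · refine clinch0' (pf_nonneg ha hv1nn) hfeas (hIRg _ _ ha hv1nn)
          (hPOg _ _ ha hv1nn) (hq0 _ _ ha hv1nn) (hq1 _ _ ha hv1nn) 0 ?_ ?_
        · simpa using hC0.symm
        · simpa using ha0pos
      · by_contra hne
        have hpos : 0 < X (pf a (v 1)) 1 0 :=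
          lt_of_le_of_ne (hfeas.1 1 0).1 (Ne.symm hne)
        have hp0 : P (pf a (v 1)) 0 = b 0 := by
          refine clinch0 (pf_nonneg ha hv1nn) hfeas (hIRg _ _ ha hv1nn)
            (hPOg _ _ ha hv1nn) (hq0 _ _ ha hv1nn) (hq1 _ _ ha hv1nn) 0 ?_ ?_ hpos
          · simpa using h20
          · simpa using hCpos
        have hsw := ratio_swap (pf_nonneg ha hv1nn) hfeas (hIRg _ _ ha hv1nn)
          (hPOg _ _ ha hv1nn) (hq0 _ _ ha hv1nn) hslack (by simpa using h50)
        have hx01 : X (pf a (v 1)) 0 1 = 0 := by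
          rcases hsw with hsw | hsw
          · exact absurd hsw hne
          · exact hsw
        have hIRv := (hIRg _ _ ha hv1nn).1 0
        rw [av_eq] at hIRv
        simp only [pf_zero, hx01, hp0] at hIRv
        have hle1 := (hfeas.1 0 0).2
        have hmul : X (pf a (v 1)) 0 0 * a 0 ≤ a 0 :=
          mul_le_of_le_one_left (le_of_lt ha0pos) hle1
        linarith
    have hfa0 : X (pf a (v 1)) 0 0 + X (pf a (v 1)) 1 0 = 1 := by
      refine full_alloc (pf_nonneg ha hv1nn) hfeas (hIRg _ _ ha hv1nn)
        (hPOg _ _ ha hv1nn) (hq0 _ _ ha hv1nn) (hq1 _ _ ha hv1nn) hslack 0 (Or.inr ?_)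
      simpa using ha0pos
    have hx00 : X (pf a (v 1)) 0 0 = 1 := by rw [hx10] at hfa0; linarith
    have hfa1 : X (pf a (v 1)) 0 1 + X (pf a (v 1)) 1 1 = 1 := by
      refine full_alloc (pf_nonneg ha hv1nn) hfeas (hIRg _ _ ha hv1nn)
        (hPOg _ _ ha hv1nn) (hq0 _ _ ha hv1nn) (hq1 _ _ ha hv1nn) hslack 1 (Or.inl ?_)
      simpa using hDpos
    rcases eq_or_lt_of_le (hfeas.1 1 1).1 with h11z | h11p
    · left
      exact ⟨hx00, by linarith [h11z.symm ▸ hfa1]⟩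
    · right
      have hp0 : P (pf a (v 1)) 0 = b 0 := by
        refine clinch0 (pf_nonneg ha hv1nn) hfeas (hIRg _ _ ha hv1nn)
          (hPOg _ _ ha hv1nn) (hq0 _ _ ha hv1nn) (hq1 _ _ ha hv1nn) 1 ?_ ?_ h11p
        · simpa using h31
        · simpa using hDpos
      exact ⟨hx00, by linarith, hp0⟩

  -- rewrite the goal in terms of the profile `pf (v 0) (v 1)`
  have hveq : v = pf (v 0) (v 1) := v_eq_pf v
  have hXv : X v = X (pf (v 0) (v 1)) := by rw [← hveq]
  have hPv : P v = P (pf (v 0) (v 1)) := by rw [← hveq]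
  have hfeasv := hFg (v 0) (v 1) hv0nn hv1nn
  rcases CL (v 0) hv0nn h2 h4 h3 h5 with ⟨hx00, hx01⟩ | ⟨hx00, hx01lt, hp0⟩
  · -- case (a) at the true profile: impossible
    exfalso
    have hmain : v 1 0 + v 1 1 - b 0 ≤ 0 := by
      refine le_of_forall_delta (a := v 1 0 + v 1 1 - b 0) (c := 0)
        (d0 := min (b 0 - v 1 0) (v 1 1)) (lt_min (by linarith) hDpos) ?_
      intro δ hδpos hδlt
      have hδ1 : δ < b 0 - v 1 0 := lt_of_lt_of_le hδlt (min_le_left _ _)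
      have hδ2 : δ < v 1 1 := lt_of_lt_of_le hδlt (min_le_right _ _)
      have hR := R1 (v 1 0 + δ) (v 1 1 - δ) (by linarith) (by linarith) (by linarith)
        (by linarith)
      have hann := vecnn (v 1 0 + δ) (v 1 1 - δ) (by linarith) (by linarith)
      have hic := IC0 ![v 1 0 + δ, v 1 1 - δ] (v 0) hann hv0nn
      simp only [Matrix.cons_val_zero, Matrix.cons_val_one, Matrix.head_cons] at hic
      rw [hx00, hx01, hR.1, hR.2.1] at hic
      have hqb := hq0 (v 0) (v 1) hv0nn hv1nn
      linarith [hR.2.2.1]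
    linarith
  · -- case (b): p 0 = b 0 and the allocation of item 1 is pinned down
    have hc0 : 0 ≤ X (pf (v 0) (v 1)) 0 1 := (hfeasv.1 0 1).1
    have hc1 : X (pf (v 0) (v 1)) 0 1 ≤ 1 := (hfeasv.1 0 1).2
    -- upper bound
    have hub : v 1 1 * X (pf (v 0) (v 1)) 0 1 ≤ b 0 - v 1 0 := by
      refine le_of_forall_delta (d0 := min (b 0 - v 1 0) (v 1 1))
        (lt_min (by linarith) hDpos) ?_
      intro δ hδpos hδlt
      have hδ1 : δ < b 0 - v 1 0 := lt_of_lt_of_le hδlt (min_le_left _ _)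
      have hδ2 : δ < v 1 1 := lt_of_lt_of_le hδlt (min_le_right _ _)
      have hR := R1 (v 1 0 + δ) (v 1 1 - δ) (by linarith) (by linarith) (by linarith)
        (by linarith)
      have hann := vecnn (v 1 0 + δ) (v 1 1 - δ) (by linarith) (by linarith)
      have hic := IC0 ![v 1 0 + δ, v 1 1 - δ] (v 0) hann hv0nn
      simp only [Matrix.cons_val_zero, Matrix.cons_val_one, Matrix.head_cons] at hic
      rw [hx00, hR.1, hR.2.1, hp0] at hic
      -- hic : 1 * (v10+δ) + c * (v11-δ) - b0 ≤ 1 * (v10+δ) + 0 * (v11-δ) - q'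
      have hmul : X (pf (v 0) (v 1)) 0 1 * δ ≤ δ :=
        mul_le_of_le_one_left (le_of_lt hδpos) hc1
      linarith [hR.2.2.1]
    -- lower bound
    have hlb : b 0 - v 1 0 ≤ v 1 1 * X (pf (v 0) (v 1)) 0 1 := by
      have hd0pos : 0 < min (b 0 - v 1 0) ((v 0 0 - v 1 0) * v 1 1 / (v 1 0 + 1)) := by
        refine lt_min (by linarith) ?_
        have : 0 < (v 0 0 - v 1 0) * v 1 1 := by nlinarith
        positivity
      refine le_of_forall_delta (d0 := min (b 0 - v 1 0) ((v 0 0 - v 1 0) * v 1 1 / (v 1 0 + 1)))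
        hd0pos ?_
      intro δ hδpos hδlt
      set δ' := δ / 2 with hδ'
      have hδ'pos : 0 < δ' := by simp only [hδ']; linarith
      have hδ1 : δ' < b 0 - v 1 0 := by
        have := lt_of_lt_of_le hδlt (min_le_left _ _); simp only [hδ']; linarith
      have hδ2 : δ' * (v 1 0 + 1) < (v 0 0 - v 1 0) * v 1 1 := by
        have h := lt_of_lt_of_le hδlt (min_le_right _ _)
        have h' : δ * (v 1 0 + 1) < (v 0 0 - v 1 0) * v 1 1 := by
          rw [← div_mul_cancel₀ ((v 0 0 - v 1 0) * v 1 1) (by linarith : (v 1 0 : ℝ) + 1 ≠ 0)]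
          exact mul_lt_mul_of_pos_right h (by linarith)
        have : δ' * (v 1 0 + 1) ≤ δ * (v 1 0 + 1) := by
          apply mul_le_mul_of_nonneg_right _ (by linarith)
          simp only [hδ']; linarith
        linarith
      have hratio : (v 1 1 + δ') * v 1 0 < v 0 0 * v 1 1 := by nlinarith
      -- the report rδ = (v 0 0, v 1 1 + δ')
      have hrnn := vecnn (v 0 0) (v 1 1 + δ') (le_of_lt hApos) (by linarith)
      have hCL := CL ![v 0 0, v 1 1 + δ'] hrnn (by simpa using h2) (by simpa using h4)
        (by simp; linarith) (by simpa using hratio)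
      -- rule out case (a) at rδ
      rcases hCL with ⟨hy00, hy01⟩ | ⟨hy00, hy01lt, hyp0⟩
      · exfalso
        have hic := IC0 (v 0) ![v 0 0, v 1 1 + δ'] hv0nn hrnn
        rw [hx00, hp0, hy00, hy01] at hic
        have hqb := hq0 ![v 0 0, v 1 1 + δ'] (v 1) hrnn hv1nn
        have hmul : X (pf (v 0) (v 1)) 0 1 * v 0 1 < 1 * v 0 1 :=
          mul_lt_mul_of_pos_right hx01lt hBpos
        linarith
      · -- cδ ≤ c
        have hic1 := IC0 (v 0) ![v 0 0, v 1 1 + δ'] hv0nn hrnn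
        rw [hx00, hp0, hy00, hyp0] at hic1
        have hcδc : X (pf ![v 0 0, v 1 1 + δ'] (v 1)) 0 1 ≤ X (pf (v 0) (v 1)) 0 1 :=
          le_of_mul_le_mul_right (by linarith) hBpos
        -- compare rδ with the report (v10 + δ', 0)
        have hR := R1 (v 1 0 + δ') 0 (by linarith) (by linarith) le_rfl hDpos
        have hann := vecnn (v 1 0 + δ') 0 (by linarith) le_rfl
        have hic2 := IC0 ![v 0 0, v 1 1 + δ'] ![v 1 0 + δ', 0] hrnn hann
        simp only [Matrix.cons_val_zero, Matrix.cons_val_one, Matrix.head_cons] at hic2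
        rw [hy00, hyp0, hR.1, hR.2.1] at hic2
        -- hic2 : 1 * v00 + 0 * (v11+δ') - q' ≤ 1 * v00 + cδ * (v11+δ') - b0
        have hcδ0 : 0 ≤ X (pf ![v 0 0, v 1 1 + δ'] (v 1)) 0 1 :=
          ((hFg _ _ hrnn hv1nn).1 0 1).1
        have hq'ub := hR.2.2.2
        -- b0 - (v10 + δ') ≤ cδ * (v11 + δ') ≤ c * v11 + δ'
        have hcδub : X (pf ![v 0 0, v 1 1 + δ'] (v 1)) 0 1 ≤ 1 :=
          ((hFg _ _ hrnn hv1nn).1 0 1).2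
        have hm1 : X (pf ![v 0 0, v 1 1 + δ'] (v 1)) 0 1 * v 1 1 ≤
            X (pf (v 0) (v 1)) 0 1 * v 1 1 :=
          mul_le_mul_of_nonneg_right hcδc hDnn
        have hm2 : X (pf ![v 0 0, v 1 1 + δ'] (v 1)) 0 1 * δ' ≤ δ' :=
          mul_le_of_le_one_left (le_of_lt hδ'pos) hcδub
        linarith [hq'ub]
    have hcval : X (pf (v 0) (v 1)) 0 1 = (b 0 - v 1 0) / v 1 1 := by
      rw [eq_div_iff (ne_of_gt hDpos)]
      linarith [hub, hlb]
    refine ⟨by rw [hPv]; exact hp0, by rw [hXv]; exact hcval, by rw [hXv]; exact hx01lt⟩
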